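/- Let V ⊆ S² be finite, and let {a,b} and {c,d} be two edges of the weak Gabriel graph of V with {a,b} ≠ {c,d}. If some point s ∈ S² lies in the relative interior of the minor great-circular arc with endpoints a, b and also in the relative interior of the minor great-circular arc with endpoints c, d, then the two arcs have the same spherical length and the same spherical midpoint, and s equals this common midpoint: ⟨a,b⟩ = ⟨c,d⟩ and s = (a+b)/‖a+b‖ = (c+d)/‖c+d‖. -/

import Mathlib

open scoped RealInnerProductSpace Classical

noncomputable section

abbrev Euc (d : ℕ) : Type := EuclideanSpace ℝ (Fin d)

/-- `{p, q}` is a double-normal pair of the finite point set `V`. -/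
def IsDNPair {d : ℕ} (V : Finset (Euc d)) (p q : Euc d) : Prop :=
  p ∈ V ∧ q ∈ V ∧ p ≠ q ∧
    ∀ v ∈ V, 0 ≤ ⟪v - p, q - p⟫ ∧ 0 ≤ ⟪v - q, p - q⟫

/-- `N(V)`: the number of (unordered) double-normal pairs of `V`. -/
def numDN {d : ℕ} (V : Finset (Euc d)) : ℕ :=
  ((V ×ˢ V).filter fun pq => IsDNPair V pq.1 pq.2).card / 2

/-- `{p, q}` is a strict double-normal pair of `V`. -/
def IsStrictDNPair {d : ℕ} (V : Finset (Euc d)) (p q : Euc d) : Prop :=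
  IsDNPair V p q ∧
    ∀ v ∈ V, v ≠ p → v ≠ q → 0 < ⟪v - p, q - p⟫ ∧ 0 < ⟪v - q, p - q⟫

/-- `N'(V)`: the number of (unordered) strict double-normal pairs of `V`. -/
def numStrictDN {d : ℕ} (V : Finset (Euc d)) : ℕ :=
  ((V ×ˢ V).filter fun pq => IsStrictDNPair V pq.1 pq.2).card / 2

/-- `{a, b}` is an edge of the weak Gabriel graph of `V ⊆ S²`: `a` and `b` are distinct,
non-antipodal, and no point of `V` lies in the open minor spherical cap with diameter `ab`. -/
def IsWeakGabrielEdge (V : Finset (Euc 3)) (a b : Euc 3) : Prop :=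
  a ∈ V ∧ b ∈ V ∧ a ≠ b ∧ b ≠ -a ∧ ∀ v ∈ V, 0 ≤ ⟪v - a, v - b⟫

/-- The number of edges of the weak Gabriel graph of `V`. -/
def numWeakGabriel (V : Finset (Euc 3)) : ℕ :=
  ((V ×ˢ V).filter fun pq => IsWeakGabrielEdge V pq.1 pq.2).card / 2

/-- `{a, b}` is an edge of the strict Gabriel graph of `V ⊆ S²`: `a` and `b` are distinct,
non-antipodal, and no point of `V \ {a, b}` lies in the closed minor spherical cap with
diameter `ab`. -/
def IsStrictGabrielEdge (V : Finset (Euc 3)) (a b : Euc 3) : Prop :=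
  a ∈ V ∧ b ∈ V ∧ a ≠ b ∧ b ≠ -a ∧ ∀ v ∈ V, v ≠ a → v ≠ b → 0 < ⟪v - a, v - b⟫

/-- The relative interior of the minor great-circular arc with endpoints `a`, `b`. -/
def arcInterior (a b : Euc 3) : Set (Euc 3) :=
  {x | ∃ lam mu : ℝ, 0 < lam ∧ 0 < mu ∧
    x = (‖lam • a + mu • b‖)⁻¹ • (lam • a + mu • b)}

set_option maxHeartbeats 1600000 in
/-- Two crossing edges of the weak Gabriel graph on `S²` have the same spherical length and
the same spherical midpoint, which is the crossing point. -/
theorem weakGabriel_crossing (V : Finset (Euc 3)) (hV : ∀ v ∈ V, ‖v‖ = 1)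
    (a b c d : Euc 3) (hab : IsWeakGabrielEdge V a b) (hcd : IsWeakGabrielEdge V c d)
    (hne : ({a, b} : Set (Euc 3)) ≠ {c, d}) (s : Euc 3)
    (hs₁ : s ∈ arcInterior a b) (hs₂ : s ∈ arcInterior c d) :
    ⟪a, b⟫ = ⟪c, d⟫ ∧ s = (‖a + b‖)⁻¹ • (a + b) ∧ s = (‖c + d‖)⁻¹ • (c + d) := by
  obtain ⟨haV, hbV, habne, hba, habcap⟩ := hab
  obtain ⟨hcV, hdV, hcdne, hdc, hcdcap⟩ := hcd
  obtain ⟨α, β, hα, hβ, hsp⟩ := hs₁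
  obtain ⟨γ', δ', hγ', hδ', hsq⟩ := hs₂
  have ha1 : ‖a‖ = 1 := hV a haV
  have hb1 : ‖b‖ = 1 := hV b hbV
  have hc1 : ‖c‖ = 1 := hV c hcV
  have hd1 : ‖d‖ = 1 := hV d hdV
  have iaa : ⟪a, a⟫ = 1 := by rw [real_inner_self_eq_norm_sq, ha1]; norm_num
  have ibb : ⟪b, b⟫ = 1 := by rw [real_inner_self_eq_norm_sq, hb1]; norm_num
  have icc : ⟪c, c⟫ = 1 := by rw [real_inner_self_eq_norm_sq, hc1]; norm_num
  have idd : ⟪d, d⟫ = 1 := by rw [real_inner_self_eq_norm_sq, hd1]; norm_num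
  have hmsq : ‖a + b‖ ^ 2 = 2 + 2 * ⟪a, b⟫ := by
    rw [norm_add_sq_real, ha1, hb1]; ring
  have hnsq : ‖c + d‖ ^ 2 = 2 + 2 * ⟪c, d⟫ := by
    rw [norm_add_sq_real, hc1, hd1]; ring
  have hm0 : a + b ≠ 0 := fun h => hba (by rw [eq_neg_iff_add_eq_zero, add_comm]; exact h)
  have hn0 : c + d ≠ 0 := fun h => hdc (by rw [eq_neg_iff_add_eq_zero, add_comm]; exact h)
  have ht : 0 < 1 + ⟪a, b⟫ := by
    have := norm_pos_iff.2 hm0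
    nlinarith [hmsq]
  have ht' : 0 < 1 + ⟪c, d⟫ := by
    have := norm_pos_iff.2 hn0
    nlinarith [hnsq]
  -- cap conditions
  have capc : ⟪c, a + b⟫ ≤ 1 + ⟪a, b⟫ := by
    have h := habcap c hcV
    simp only [inner_sub_left, inner_sub_right, inner_add_right] at h ⊢
    linarith [real_inner_comm c a, icc]
  have capd : ⟪d, a + b⟫ ≤ 1 + ⟪a, b⟫ := by
    have h := habcap d hdV
    simp only [inner_sub_left, inner_sub_right, inner_add_right] at h ⊢
    linarith [real_inner_comm d a, idd]
  have capa : ⟪a, c + d⟫ ≤ 1 + ⟪c, d⟫ := by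
    have h := hcdcap a haV
    simp only [inner_sub_left, inner_sub_right, inner_add_right] at h ⊢
    linarith [real_inner_comm a c, iaa]
  have capb : ⟪b, c + d⟫ ≤ 1 + ⟪c, d⟫ := by
    have h := hcdcap b hbV
    simp only [inner_sub_left, inner_sub_right, inner_add_right] at h ⊢
    linarith [real_inner_comm b c, ibb]
  -- p and q nonzero
  have hpm1 : ⟪α • a + β • b, a + b⟫ = (α + β) * (1 + ⟪a, b⟫) := by
    simp only [inner_add_left, inner_add_right, real_inner_smul_left]
    rw [iaa, ibb, real_inner_comm b a]; ring
  have hqn1 : ⟪γ' • c + δ' • d, c + d⟫ = (γ' + δ') * (1 + ⟪c, d⟫) := by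
    simp only [inner_add_left, inner_add_right, real_inner_smul_left]
    rw [icc, idd, real_inner_comm d c]; ring
  have hp0 : α • a + β • b ≠ 0 := by
    intro h
    rw [h, inner_zero_left] at hpm1
    nlinarith
  have hq0 : γ' • c + δ' • d ≠ 0 := by
    intro h
    rw [h, inner_zero_left] at hqn1
    nlinarith
  have hpnorm : (0:ℝ) < ‖α • a + β • b‖ := norm_pos_iff.2 hp0
  have hqnorm : (0:ℝ) < ‖γ' • c + δ' • d‖ := norm_pos_iff.2 hq0
  -- rescale: p = γ•c + δ•d
  set r : ℝ := ‖α • a + β • b‖ * ‖γ' • c + δ' • d‖⁻¹ with hr_def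
  have hr : 0 < r := by positivity
  set γ : ℝ := r * γ' with hγ_def
  set δ : ℝ := r * δ' with hδ_def
  have hγ : 0 < γ := by positivity
  have hδ : 0 < δ := by positivity
  have hpw : α • a + β • b = γ • c + δ • d := by
    have e1 : α • a + β • b = (‖α • a + β • b‖ : ℝ) • s := by
      rw [hsp, smul_smul, mul_inv_cancel₀ (ne_of_gt hpnorm), one_smul]
    rw [e1, hsq, hγ_def, hδ_def, hr_def, smul_smul, smul_add, smul_smul, smul_smul]
  -- inner products of p with m and n computed two ways
  have hpm2 : ⟪α • a + β • b, a + b⟫ = γ * ⟪c, a + b⟫ + δ * ⟪d, a + b⟫ := by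
    rw [hpw]; simp only [inner_add_left, real_inner_smul_left]
  have hpn2 : ⟪α • a + β • b, c + d⟫ = α * ⟪a, c + d⟫ + β * ⟪b, c + d⟫ := by
    simp only [inner_add_left, real_inner_smul_left]
  have hpn1 : ⟪α • a + β • b, c + d⟫ = (γ + δ) * (1 + ⟪c, d⟫) := by
    rw [hpw]
    simp only [inner_add_left, inner_add_right, real_inner_smul_left]
    rw [icc, idd, real_inner_comm d c]; ring
  -- sum equality
  have hsum : α + β = γ + δ := by
    have h1 : (α + β) * (1 + ⟪a, b⟫) ≤ (γ + δ) * (1 + ⟪a, b⟫) := by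
      rw [← hpm1, hpm2]
      nlinarith [capc, capd, hγ, hδ]
    have h2 : (γ + δ) * (1 + ⟪c, d⟫) ≤ (α + β) * (1 + ⟪c, d⟫) := by
      rw [← hpn1, hpn2]
      nlinarith [capa, capb, hα, hβ]
    have hle1 : α + β ≤ γ + δ := (mul_le_mul_iff_of_pos_right ht).1 h1
    have hle2 : γ + δ ≤ α + β := (mul_le_mul_iff_of_pos_right ht').1 h2
    linarith
  -- equality in caps
  have h1 : γ * ⟪c, a + b⟫ + δ * ⟪d, a + b⟫ = γ * (1 + ⟪a, b⟫) + δ * (1 + ⟪a, b⟫) := by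
    have h0 : γ * ⟪c, a + b⟫ + δ * ⟪d, a + b⟫ = (γ + δ) * (1 + ⟪a, b⟫) := by
      rw [← hpm2, hpm1, hsum]
    linear_combination h0
  have h1' : α * ⟪a, c + d⟫ + β * ⟪b, c + d⟫ = α * (1 + ⟪c, d⟫) + β * (1 + ⟪c, d⟫) := by
    have h0 : α * ⟪a, c + d⟫ + β * ⟪b, c + d⟫ = (α + β) * (1 + ⟪c, d⟫) := by
      rw [← hpn2, hpn1, hsum]
    linear_combination h0
  have heqc : ⟪c, a + b⟫ = 1 + ⟪a, b⟫ := by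
    have e1 : γ * ⟪c, a + b⟫ = γ * (1 + ⟪a, b⟫) := by
      linarith [mul_le_mul_of_nonneg_left capc hγ.le, mul_le_mul_of_nonneg_left capd hδ.le]
    exact mul_left_cancel₀ (ne_of_gt hγ) e1
  have heqd : ⟪d, a + b⟫ = 1 + ⟪a, b⟫ := by
    have e1 : δ * ⟪d, a + b⟫ = δ * (1 + ⟪a, b⟫) := by
      linarith [mul_le_mul_of_nonneg_left capc hγ.le, mul_le_mul_of_nonneg_left capd hδ.le]
    exact mul_left_cancel₀ (ne_of_gt hδ) e1
  have heqa : ⟪a, c + d⟫ = 1 + ⟪c, d⟫ := by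
    have e1 : α * ⟪a, c + d⟫ = α * (1 + ⟪c, d⟫) := by
      linarith [mul_le_mul_of_nonneg_left capa hα.le, mul_le_mul_of_nonneg_left capb hβ.le]
    exact mul_left_cancel₀ (ne_of_gt hα) e1
  have heqb : ⟪b, c + d⟫ = 1 + ⟪c, d⟫ := by
    have e1 : β * ⟪b, c + d⟫ = β * (1 + ⟪c, d⟫) := by
      linarith [mul_le_mul_of_nonneg_left capa hα.le, mul_le_mul_of_nonneg_left capb hβ.le]
    exact mul_left_cancel₀ (ne_of_gt hβ) e1
  -- t = t'
  have hinner_mn : ⟪a + b, c + d⟫ = 2 * (1 + ⟪c, d⟫) := by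
    simp only [inner_add_left]
    linarith [heqa, heqb]
  have hinner_nm : ⟪a + b, c + d⟫ = 2 * (1 + ⟪a, b⟫) := by
    rw [real_inner_comm]
    simp only [inner_add_left]
    linarith [heqc, heqd]
  have htt : ⟪a, b⟫ = ⟪c, d⟫ := by linarith [hinner_mn, hinner_nm]
  -- m = n
  have hmn : a + b = c + d := by
    have h : ‖(a + b) - (c + d)‖ ^ 2 = 0 := by
      rw [norm_sub_sq_real, hmsq, hnsq, hinner_mn]
      linarith [htt]
    have := sq_eq_zero_iff.1 h
    rwa [norm_eq_zero, sub_eq_zero] at this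
  refine ⟨htt, ?_⟩
  -- key vector identity
  have hkey : (α - β) • (a - b) = (γ - δ) • (c - d) := by
    have h2 : (α - β) • (a - b) = (2:ℝ) • (α • a + β • b) - (α + β) • (a + b) := by
      module
    have h3 : (γ - δ) • (c - d) = (2:ℝ) • (γ • c + δ • d) - (γ + δ) • (c + d) := by
      module
    rw [h2, h3, hpw, hmn, hsum]
  by_cases hαβ : α = β
  · -- s is the midpoint
    have hps : α • a + β • b = α • (a + b) := by rw [hαβ]; module
    have hmain : s = (‖a + b‖)⁻¹ • (a + b) := by
      rw [hsp, hps, norm_smul, Real.norm_eq_abs, abs_of_pos hα, mul_inv, smul_smul]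
      congr 1
      rw [mul_comm, ← mul_assoc, mul_inv_cancel₀ hα.ne', one_mul]
    exact ⟨hmain, by rw [hmain, hmn]⟩
  · exfalso
    have hab_sub : a - b ≠ 0 := sub_ne_zero.2 habne
    have hcd_sub : c - d ≠ 0 := sub_ne_zero.2 hcdne
    have hsubnorm : ‖a - b‖ = ‖c - d‖ := by
      have h1 : ‖a - b‖ ^ 2 = 2 - 2 * ⟪a, b⟫ := by rw [norm_sub_sq_real, ha1, hb1]; ring
      have h2 : ‖c - d‖ ^ 2 = 2 - 2 * ⟪c, d⟫ := by rw [norm_sub_sq_real, hc1, hd1]; ring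
      have h3 : ‖a - b‖ ^ 2 = ‖c - d‖ ^ 2 := by rw [h1, h2, htt]
      exact (sq_eq_sq₀ (norm_nonneg _) (norm_nonneg _)).1 h3
    have habs : |α - β| = |γ - δ| := by
      have h := congrArg norm hkey
      rw [norm_smul, norm_smul, Real.norm_eq_abs, Real.norm_eq_abs, hsubnorm] at h
      have hcdn : (0:ℝ) < ‖c - d‖ := norm_pos_iff.2 hcd_sub
      exact mul_right_cancel₀ (ne_of_gt hcdn) h
    have hαβ' : α - β ≠ 0 := sub_ne_zero.2 hαβ
    rcases abs_eq_abs.1 habs with h | h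
    · -- a - b = c - d
      have hsub : a - b = c - d := by
        have := hkey
        rw [← h] at this
        exact smul_right_injective _ hαβ' this
      have hac : a = c := by
        have h2 : (2:ℝ) • a = (2:ℝ) • c := by
          rw [show (2:ℝ) • a = (a - b) + (a + b) by module, hsub, hmn]; module
        exact smul_right_injective _ two_ne_zero h2
      have hbd : b = d := by
        have h2 : (2:ℝ) • b = (2:ℝ) • d := by
          rw [show (2:ℝ) • b = (a + b) - (a - b) by module, hsub, hmn]; module
        exact smul_right_injective _ two_ne_zero h2
      exact hne (by rw [hac, hbd])
    · -- a - b = d - c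
      have hsub : a - b = d - c := by
        have h2 : (α - β) • (a - b) = (α - β) • (d - c) := by
          rw [hkey, h]; module
        exact smul_right_injective _ hαβ' h2
      have had : a = d := by
        have h2 : (2:ℝ) • a = (2:ℝ) • d := by
          rw [show (2:ℝ) • a = (a - b) + (a + b) by module, hsub, hmn]; module
        exact smul_right_injective _ two_ne_zero h2
      have hbc : b = c := by
        have h2 : (2:ℝ) • b = (2:ℝ) • c := by
          rw [show (2:ℝ) • b = (a + b) - (a - b) by module, hsub, hmn]
          module
        exact smul_right_injective _ two_ne_zero h2
      exact hne (by rw [had, hbc, Set.pair_comm])
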